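/- arXiv:2604.08638 — 4 statements merged into one kernel-verified Lean document; each statement's English description precedes it below -/
import Mathlib

section
/- Let K be an almost real closed field, i.e. a field admitting a valuation subring that is henselian as a local ring and whose residue field is real closed. If <₁ and <₂ are two linear orders on K, each making K a linearly ordered field, then the order topology on K induced by <₁ coincides with the order topology on K induced by <₂. -/
/-- A linear order on a field `K` (given by its strict order relation) making `K`
a linearly ordered field. -/
structure FieldOrder (K : Type*) [Field K] where
  /-- the strict order relation -/
  lt : K → K → Prop
  lt_trans : ∀ a b c : K, lt a b → lt b c → lt a c
  lt_irrefl : ∀ a : K, ¬ lt a a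
  lt_total : ∀ a b : K, a ≠ b → lt a b ∨ lt b a
  add_lt_add_left : ∀ a b c : K, lt a b → lt (c + a) (c + b)
  mul_pos : ∀ a b : K, lt 0 a → lt 0 b → lt 0 (a * b)

/-- The order topology on `K` associated to a strict order relation `lt`:
the topology generated by the open intervals. -/
def orderTopologyOf {K : Type*} (lt : K → K → Prop) : TopologicalSpace K :=
  TopologicalSpace.generateFrom {s | ∃ a b : K, s = {x | lt a x ∧ lt x b}}

/-- A linearly ordered field (given by a `FieldOrder`) is real closed if every nonnegative
element is a square and every polynomial of odd degree has a root. -/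
def FieldOrder.IsRealClosed {K : Type*} [Field K] (o : FieldOrder K) : Prop :=
  (∀ x : K, ¬ o.lt x 0 → ∃ y : K, y ^ 2 = x) ∧
    (∀ p : Polynomial K, Odd p.natDegree → ∃ x : K, p.eval x = 0)

/-- A field is almost real closed if it admits a henselian valuation subring whose
residue field admits an order making it a real closed field. -/
def IsAlmostRealClosedField (K : Type*) [Field K] : Prop :=
  ∃ A : ValuationSubring K, HenselianLocalRing A ∧
    ∃ o : FieldOrder (IsLocalRing.ResidueField A), o.IsRealClosed

namespace FieldOrder

variable {K : Type*} [Field K] (o : FieldOrder K)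

theorem asymm {a b : K} (h : o.lt a b) : ¬ o.lt b a :=
  fun h' => o.lt_irrefl a (o.lt_trans _ _ _ h h')

theorem ne_of_lt' {a b : K} (h : o.lt a b) : a ≠ b := by
  rintro rfl; exact o.lt_irrefl a h

theorem lt_iff_sub_pos (a b : K) : o.lt a b ↔ o.lt 0 (b - a) := by
  constructor
  · intro h
    have := o.add_lt_add_left a b (-a) h
    have e1 : -a + a = 0 := by ring
    have e2 : -a + b = b - a := by ring
    rwa [e1, e2] at this
  · intro h
    have := o.add_lt_add_left 0 (b - a) a h
    have e1 : a + 0 = a := by ring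
    have e2 : a + (b - a) = b := by ring
    rwa [e1, e2] at this

theorem neg_pos_iff (a : K) : o.lt a 0 ↔ o.lt 0 (-a) := by
  have := o.lt_iff_sub_pos a 0
  rwa [zero_sub] at this

theorem pos_ne {a : K} (h : o.lt 0 a) : a ≠ 0 := (o.ne_of_lt' h).symm

theorem add_pos {a b : K} (ha : o.lt 0 a) (hb : o.lt 0 b) : o.lt 0 (a + b) := by
  have := o.add_lt_add_left 0 b a hb
  rw [add_zero] at this
  exact o.lt_trans _ _ _ ha this

theorem neg_lt_neg {a b : K} (h : o.lt a b) : o.lt (-b) (-a) := by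
  rw [o.lt_iff_sub_pos] at h ⊢
  have e : -a - -b = b - a := by ring
  rwa [e]

theorem sq_pos {x : K} (hx : x ≠ 0) : o.lt 0 (x * x) := by
  rcases o.lt_total 0 x (Ne.symm hx) with h | h
  · exact o.mul_pos _ _ h h
  · have h' := (o.neg_pos_iff x).mp h
    have := o.mul_pos _ _ h' h'
    rwa [neg_mul_neg] at this

theorem mul_lt_mul_left {a b : K} (h : o.lt a b) (c : K) (hc : o.lt 0 c) :
    o.lt (c * a) (c * b) := by
  rw [o.lt_iff_sub_pos] at h ⊢
  have := o.mul_pos _ _ hc h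
  have e : c * (b - a) = c * b - c * a := by ring
  rwa [e] at this

open Classical in
/-- absolute value with respect to `o` -/
noncomputable def oabs (x : K) : K := if o.lt x 0 then -x else x

theorem oabs_of_pos {x : K} (hx : o.lt 0 x) : o.oabs x = x :=
  if_neg (o.asymm hx)

theorem oabs_of_neg {x : K} (hx : o.lt x 0) : o.oabs x = -x := if_pos hx

theorem oabs_zero : o.oabs 0 = 0 := if_neg (o.lt_irrefl 0)

theorem oabs_pos {x : K} (hx : x ≠ 0) : o.lt 0 (o.oabs x) := by
  rcases o.lt_total 0 x (Ne.symm hx) with h | h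
  · rwa [o.oabs_of_pos h]
  · rw [o.oabs_of_neg h]
    exact (o.neg_pos_iff x).mp h

theorem oabs_ne_zero {x : K} (hx : x ≠ 0) : o.oabs x ≠ 0 := o.pos_ne (o.oabs_pos hx)

theorem mul_neg_of_pos_of_neg {a b : K} (ha : o.lt 0 a) (hb : o.lt b 0) : o.lt (a * b) 0 := by
  rw [o.neg_pos_iff]
  have := o.mul_pos _ _ ha ((o.neg_pos_iff b).mp hb)
  rwa [mul_neg] at this

theorem oabs_mul (a b : K) : o.oabs (a * b) = o.oabs a * o.oabs b := by
  rcases eq_or_ne a 0 with rfl | ha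
  · simp [o.oabs_zero]
  rcases eq_or_ne b 0 with rfl | hb
  · simp [o.oabs_zero]
  rcases o.lt_total 0 a (Ne.symm ha) with ha' | ha' <;>
    rcases o.lt_total 0 b (Ne.symm hb) with hb' | hb'
  · rw [o.oabs_of_pos ha', o.oabs_of_pos hb', o.oabs_of_pos (o.mul_pos _ _ ha' hb')]
  · rw [o.oabs_of_pos ha', o.oabs_of_neg hb',
      o.oabs_of_neg (o.mul_neg_of_pos_of_neg ha' hb'), mul_neg]
  · rw [o.oabs_of_neg ha', o.oabs_of_pos hb', neg_mul]
    have : o.lt (b * a) 0 := o.mul_neg_of_pos_of_neg hb' ha'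
    rw [mul_comm] at this
    rw [o.oabs_of_neg this]
  · rw [o.oabs_of_neg ha', o.oabs_of_neg hb', neg_mul_neg]
    have := o.mul_pos _ _ ((o.neg_pos_iff a).mp ha') ((o.neg_pos_iff b).mp hb')
    rw [neg_mul_neg] at this
    rw [o.oabs_of_pos this]

theorem oabs_lt_of_lt {x d : K} (h1 : o.lt (-d) x) (h2 : o.lt x d) : o.lt (o.oabs x) d := by
  rcases eq_or_ne x 0 with rfl | hx
  · rw [o.oabs_zero]
    exact h2
  rcases o.lt_total 0 x (Ne.symm hx) with h | h
  · rwa [o.oabs_of_pos h]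
  · rw [o.oabs_of_neg h]
    have := o.neg_lt_neg h1
    rwa [neg_neg] at this

end FieldOrder

section Main

variable {K : Type*} [Field K]

theorem aux_sq_of_mem_max (A : ValuationSubring K) [HenselianLocalRing A]
    (h2 : IsUnit (2 : A)) {z : A} (hz : z ∈ IsLocalRing.maximalIdeal A) :
    ∃ a : A, a * a = 1 + z := by
  have hev : Polynomial.eval 1 (Polynomial.X ^ 2 - Polynomial.C (1 + z)) ∈
      IsLocalRing.maximalIdeal A := by
    have e : Polynomial.eval 1 (Polynomial.X ^ 2 - Polynomial.C (1 + z)) = -z := by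
      rw [Polynomial.eval_sub, Polynomial.eval_pow, Polynomial.eval_X, Polynomial.eval_C]
      ring
    rw [e]
    exact neg_mem hz
  have hder : IsUnit (Polynomial.eval 1
      (Polynomial.derivative (Polynomial.X ^ 2 - Polynomial.C (1 + z)))) := by
    have e : Polynomial.eval 1
        (Polynomial.derivative (Polynomial.X ^ 2 - Polynomial.C (1 + z))) = 2 := by
      rw [Polynomial.derivative_sub, Polynomial.derivative_C, Polynomial.derivative_X_pow,
        Polynomial.eval_sub, Polynomial.eval_mul, Polynomial.eval_C, Polynomial.eval_pow,
        Polynomial.eval_X]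
      norm_num
    rw [e]
    exact h2
  obtain ⟨a, ha, -⟩ := HenselianLocalRing.is_henselian
    (Polynomial.X ^ 2 - Polynomial.C (1 + z))
    (Polynomial.monic_X_pow_sub_C _ two_ne_zero) 1 hev hder
  refine ⟨a, ?_⟩
  have := ha
  simp only [Polynomial.IsRoot, Polynomial.eval_sub, Polynomial.eval_pow,
    Polynomial.eval_X, Polynomial.eval_C] at this
  linear_combination this

/-- For any field order on `K`, elements of valuation `< 1` lie strictly
between `-1` and `1`. -/
theorem between_of_val_lt_one (A : ValuationSubring K) [HenselianLocalRing A]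
    (h2 : IsUnit (2 : A)) (P : FieldOrder K) {x : K} (hx : A.valuation x < 1) :
    P.lt (-1) x ∧ P.lt x 1 := by
  have hxA : x ∈ A := A.mem_of_valuation_le_one x hx.le
  set x' : A := ⟨x, hxA⟩ with hx'
  have hmem : x' ∈ IsLocalRing.maximalIdeal A := (A.valuation_lt_one_iff x').mpr hx
  have hone : ∀ c : K, (∃ a : A, ((a : K) * a = c)) → c ≠ 0 → P.lt 0 c := by
    rintro c ⟨a, ha⟩ hc
    have ha0 : (a : K) ≠ 0 := by
      rintro h
      rw [h, zero_mul] at ha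
      exact hc ha.symm
    rw [← ha]
    exact P.sq_pos ha0
  have key : ∀ z : A, z ∈ IsLocalRing.maximalIdeal A → ((1 : K) + z ≠ 0) →
      P.lt 0 (1 + (z : K)) := by
    intro z hzmem hz0
    obtain ⟨a, ha⟩ := aux_sq_of_mem_max A h2 hzmem
    refine hone _ ⟨a, ?_⟩ hz0
    have : ((a * a : A) : K) = ((1 + z : A) : K) := by rw [ha]
    push_cast at this
    rw [this]
  have hne1 : x ≠ -1 := by
    rintro rfl
    rw [Valuation.map_neg, Valuation.map_one] at hx
    exact lt_irrefl _ hx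
  have h1 : P.lt 0 (1 + x) := by
    have := key x' hmem (by
      intro h
      apply hne1
      have : x = -1 := by linear_combination h
      exact this)
    exact this
  have h2' : P.lt 0 (1 - x) := by
    have hmem' : -x' ∈ IsLocalRing.maximalIdeal A := neg_mem hmem
    have := key (-x') hmem' (by
      intro h
      have hx1 : x = 1 := by
        have : (((-x' : A)) : K) = -x := rfl
        rw [this] at h
        linear_combination -h
      rw [hx1, Valuation.map_one] at hx
      exact lt_irrefl _ hx)
    have e : ((-x' : A) : K) = -x := rfl
    rw [e] at this
    have e2 : (1 : K) + -x = 1 - x := by ring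
    rwa [e2] at this
  constructor
  · rw [P.lt_iff_sub_pos]
    have e : x - -1 = 1 + x := by ring
    rwa [e]
  · rw [P.lt_iff_sub_pos]
    have e : (1 : K) - x = 1 - x := rfl
    rwa [e]

end Main

section Main2

variable {K : Type*} [Field K]

theorem residue_square_lift (A : ValuationSubring K)
    (htriv : ∀ t : K, A.valuation t < 1 → t = 0) (u : A)
    (h : ∃ y, y ^ 2 = IsLocalRing.residue A u) : ∃ c : A, c * c = u := by
  obtain ⟨y, hy⟩ := h
  obtain ⟨b, hb⟩ := IsLocalRing.residue_surjective (R := A) y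
  have h0 : IsLocalRing.residue A (u - b * b) = 0 := by
    rw [map_sub, map_mul, hb, ← hy]
    ring
  have hmem : u - b * b ∈ IsLocalRing.maximalIdeal A :=
    (IsLocalRing.residue_eq_zero_iff _).mp h0
  have hval : A.valuation ((u - b * b : A) : K) < 1 :=
    (A.valuation_lt_one_iff _).mp hmem
  have hz : ((u - b * b : A) : K) = 0 := htriv _ hval
  refine ⟨b, ?_⟩
  have : ((b * b : A) : K) = ((u : A) : K) := by
    push_cast at hz ⊢
    linear_combination -hz
  exact Subtype.coe_injective this

theorem pos_transfer (A : ValuationSubring K)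
    (o : FieldOrder (IsLocalRing.ResidueField A))
    (hsq : ∀ x, ¬ o.lt x 0 → ∃ y, y ^ 2 = x)
    (htriv : ∀ t : K, A.valuation t < 1 → t = 0)
    (P Q : FieldOrder K) {x : K} (hx0 : x ≠ 0) (hx : P.lt 0 x) : Q.lt 0 x := by
  have hmemA : ∀ w : K, w ∈ A := by
    intro w
    rcases eq_or_ne w 0 with rfl | hw
    · exact zero_mem A
    by_contra hwA
    have h1 : ¬ A.valuation w ≤ 1 := fun h => hwA (A.mem_of_valuation_le_one w h)
    have h2 : (1 : _) < A.valuation w := lt_of_not_ge h1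
    have hlt : A.valuation w⁻¹ < 1 := by
      rw [map_inv₀]
      exact inv_lt_one_of_one_lt₀ h2
    have := htriv _ hlt
    rw [inv_eq_zero] at this
    exact hw this
  set u : A := ⟨x, hmemA x⟩ with hu
  set r := IsLocalRing.residue A u with hr
  by_cases hro : o.lt r 0
  · -- then -x is a square, contradiction with P.lt 0 x
    have hnr : ¬ o.lt (-r) 0 := o.asymm ((o.neg_pos_iff r).mp hro)
    obtain ⟨c, hc⟩ := residue_square_lift A htriv (-u) (by
      rw [map_neg]
      exact hsq (-r) hnr)
    have hcK : ((c : A) : K) * c = -x := by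
      have hcast : ((c * c : A) : K) = ((-u : A) : K) := by rw [hc]
      push_cast at hcast
      exact hcast
    have hc0 : (c : K) ≠ 0 := by
      intro h
      rw [h, zero_mul] at hcK
      exact hx0 (by linear_combination hcK)
    exfalso
    have hnegpos : P.lt 0 (-x) := by
      rw [← hcK]
      exact P.sq_pos hc0
    have := P.add_pos hx hnegpos
    rw [add_neg_cancel] at this
    exact P.lt_irrefl 0 this
  · obtain ⟨c, hc⟩ := residue_square_lift A htriv u (hsq r hro)
    have hcK : ((c : A) : K) * c = x := by
      have hcast : ((c * c : A) : K) = ((u : A) : K) := by rw [hc]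
      push_cast at hcast
      exact hcast
    have hc0 : (c : K) ≠ 0 := by
      intro h
      rw [h, zero_mul] at hcK
      exact hx0 hcK.symm
    rw [← hcK]
    exact Q.sq_pos hc0

theorem key_lemma (A : ValuationSubring K) [HenselianLocalRing A]
    (o : FieldOrder (IsLocalRing.ResidueField A))
    (hsq : ∀ x, ¬ o.lt x 0 → ∃ y, y ^ 2 = x)
    (P Q : FieldOrder K) {ε : K} (hε0 : ε ≠ 0) (hε : P.lt 0 ε) :
    ∃ δ : K, δ ≠ 0 ∧ Q.lt 0 δ ∧ ∀ y, Q.lt (-δ) y → Q.lt y δ → P.lt (-ε) y ∧ P.lt y ε := by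
  have h2 : IsUnit (2 : A) := by
    have h1k : o.lt 0 1 := by
      have := o.sq_pos (one_ne_zero (α := IsLocalRing.ResidueField A))
      rwa [one_mul] at this
    have h2k : (2 : IsLocalRing.ResidueField A) ≠ 0 := by
      have := o.add_pos h1k h1k
      rw [one_add_one_eq_two] at this
      exact o.pos_ne this
    have hnot : (2 : A) ∉ IsLocalRing.maximalIdeal A := by
      intro hmem
      apply h2k
      have := (IsLocalRing.residue_eq_zero_iff (2 : A)).mpr hmem
      rwa [← one_add_one_eq_two, map_add, map_one, one_add_one_eq_two] at this
    exact IsLocalRing.notMem_maximalIdeal.mp hnot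
  by_cases htriv : ∀ t : K, A.valuation t < 1 → t = 0
  · refine ⟨ε, hε0, pos_transfer A o hsq htriv P Q hε0 hε, ?_⟩
    intro y h1 h2'
    constructor
    · have hpos : Q.lt 0 (y - -ε) := (Q.lt_iff_sub_pos _ _).mp h1
      have hne0 : y - -ε ≠ 0 := Q.pos_ne hpos
      have := pos_transfer A o hsq htriv Q P hne0 hpos
      exact (P.lt_iff_sub_pos _ _).mpr this
    · have hpos : Q.lt 0 (ε - y) := (Q.lt_iff_sub_pos _ _).mp h2'
      have hne0 : ε - y ≠ 0 := Q.pos_ne hpos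
      have := pos_transfer A o hsq htriv Q P hne0 hpos
      exact (P.lt_iff_sub_pos _ _).mpr this
  · push_neg at htriv
    obtain ⟨t, ht, ht0⟩ := htriv
    have htε0 : t * ε ≠ 0 := mul_ne_zero ht0 hε0
    refine ⟨Q.oabs (t * ε), Q.oabs_ne_zero htε0, Q.oabs_pos htε0, ?_⟩
    intro y hy1 hy2
    set δ := Q.oabs (t * ε) with hδ
    have hyabs : Q.lt (Q.oabs y) δ := Q.oabs_lt_of_lt hy1 hy2
    have hyε : A.valuation (y / ε) < 1 := by
      rcases eq_or_ne y 0 with rfl | hy0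
      · rw [zero_div, map_zero]
        exact zero_lt_one
      by_contra hcon
      rw [not_lt] at hcon
      have hεv : A.valuation ε ≠ 0 := (Valuation.ne_zero_iff _).mpr hε0
      have hyv : A.valuation y ≠ 0 := (Valuation.ne_zero_iff _).mpr hy0
      have hle : A.valuation ε ≤ A.valuation y := by
        rw [map_div₀] at hcon
        have := mul_le_mul_right hcon (A.valuation ε)
        rwa [mul_one, mul_div_cancel₀ _ hεv] at this
      have hw : A.valuation (t * ε / y) < 1 := by
        rw [map_div₀, map_mul]
        have hdiv : A.valuation ε / A.valuation y ≤ 1 := by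
          rw [div_le_one₀]
          · exact hle
          · exact lt_of_le_of_ne (zero_le') (Ne.symm hyv)
        calc A.valuation t * A.valuation ε / A.valuation y
            = A.valuation t * (A.valuation ε / A.valuation y) := by rw [mul_div_assoc]
          _ ≤ A.valuation t * 1 := mul_le_mul_right hdiv _
          _ = A.valuation t := mul_one _
          _ < 1 := ht
      have hbet := between_of_val_lt_one A h2 Q hw
      have habs : Q.lt (Q.oabs (t * ε / y)) 1 := Q.oabs_lt_of_lt hbet.1 hbet.2
      have hY : Q.lt 0 (Q.oabs y) := Q.oabs_pos hy0
      have hmul := Q.mul_lt_mul_left habs (Q.oabs y) hY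
      rw [mul_one] at hmul
      have e : Q.oabs y * Q.oabs (t * ε / y) = δ := by
        rw [← Q.oabs_mul, hδ]
        congr 1
        field_simp
      rw [e] at hmul
      exact Q.asymm hmul hyabs
    have hbet := between_of_val_lt_one A h2 P hyε
    constructor
    · have := P.mul_lt_mul_left hbet.1 ε hε
      have e1 : ε * -1 = -ε := by ring
      have e2 : ε * (y / ε) = y := by field_simp
      rwa [e1, e2] at this
    · have := P.mul_lt_mul_left hbet.2 ε hε
      have e2 : ε * (y / ε) = y := by field_simp
      rwa [e2, mul_one] at this

theorem orderTopology_le_aux (A : ValuationSubring K) [HenselianLocalRing A]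
    (o : FieldOrder (IsLocalRing.ResidueField A))
    (hsq : ∀ x, ¬ o.lt x 0 → ∃ y, y ^ 2 = x)
    (o₁ o₂ : FieldOrder K) :
    orderTopologyOf o₁.lt ≤ orderTopologyOf o₂.lt := by
  apply le_generateFrom
  rintro s ⟨a, b, rfl⟩
  letI : TopologicalSpace K := orderTopologyOf o₁.lt
  have hint : ∀ x : K, o₂.lt a x → o₂.lt x b → ∃ I : Set K,
      IsOpen I ∧ x ∈ I ∧ I ⊆ {z | o₂.lt a z ∧ o₂.lt z b} := by
    intro x hax hxb
    have hε₁ : o₂.lt 0 (x - a) := (o₂.lt_iff_sub_pos a x).mp hax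
    have hε₂ : o₂.lt 0 (b - x) := (o₂.lt_iff_sub_pos x b).mp hxb
    obtain ⟨δ₁, hδ₁0, hδ₁p, hδ₁⟩ := key_lemma A o hsq o₂ o₁ (o₂.pos_ne hε₁) hε₁
    obtain ⟨δ₂, hδ₂0, hδ₂p, hδ₂⟩ := key_lemma A o hsq o₂ o₁ (o₂.pos_ne hε₂) hε₂
    obtain ⟨δ, hδp, hsub1, hsub2⟩ : ∃ δ, o₁.lt 0 δ ∧
        (∀ y, o₁.lt (-δ) y → o₁.lt y δ → o₁.lt (-δ₁) y ∧ o₁.lt y δ₁) ∧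
        (∀ y, o₁.lt (-δ) y → o₁.lt y δ → o₁.lt (-δ₂) y ∧ o₁.lt y δ₂) := by
      rcases eq_or_ne δ₁ δ₂ with rfl | hne
      · exact ⟨δ₁, hδ₁p, fun y h1 h2 => ⟨h1, h2⟩, fun y h1 h2 => ⟨h1, h2⟩⟩
      rcases o₁.lt_total δ₁ δ₂ hne with h | h
      · exact ⟨δ₁, hδ₁p, fun y h1 h2 => ⟨h1, h2⟩, fun y h1 h2 =>
          ⟨o₁.lt_trans _ _ _ (o₁.neg_lt_neg h) h1, o₁.lt_trans _ _ _ h2 h⟩⟩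
      · exact ⟨δ₂, hδ₂p, fun y h1 h2 =>
          ⟨o₁.lt_trans _ _ _ (o₁.neg_lt_neg h) h1, o₁.lt_trans _ _ _ h2 h⟩,
          fun y h1 h2 => ⟨h1, h2⟩⟩
    refine ⟨{z | o₁.lt (x - δ) z ∧ o₁.lt z (x + δ)}, ?_, ?_, ?_⟩
    · exact TopologicalSpace.isOpen_generateFrom_of_mem ⟨x - δ, x + δ, rfl⟩
    · constructor
      · rw [o₁.lt_iff_sub_pos]
        have e : x - (x - δ) = δ := by ring
        rwa [e]
      · rw [o₁.lt_iff_sub_pos]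
        have e : x + δ - x = δ := by ring
        rwa [e]
    · rintro z ⟨hz1, hz2⟩
      have hw1 : o₁.lt (-δ) (z - x) := by
        have h' := (o₁.lt_iff_sub_pos (x - δ) z).mp hz1
        rw [o₁.lt_iff_sub_pos]
        have e : z - x - -δ = z - (x - δ) := by ring
        rwa [e]
      have hw2 : o₁.lt (z - x) δ := by
        have h' := (o₁.lt_iff_sub_pos z (x + δ)).mp hz2
        rw [o₁.lt_iff_sub_pos]
        have e : δ - (z - x) = x + δ - z := by ring
        rwa [e]
      obtain ⟨h11, -⟩ := hδ₁ _ (hsub1 _ hw1 hw2).1 (hsub1 _ hw1 hw2).2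
      obtain ⟨-, h22⟩ := hδ₂ _ (hsub2 _ hw1 hw2).1 (hsub2 _ hw1 hw2).2
      constructor
      · rw [o₂.lt_iff_sub_pos]
        have h' := (o₂.lt_iff_sub_pos (-(x - a)) (z - x)).mp h11
        have e : z - x - -(x - a) = z - a := by ring
        rwa [e] at h'
      · rw [o₂.lt_iff_sub_pos]
        have h' := (o₂.lt_iff_sub_pos (z - x) (b - x)).mp h22
        have e : b - x - (z - x) = b - z := by ring
        rwa [e] at h'
  choose I hIopen hIx hIsub using hint
  have heq : {x | o₂.lt a x ∧ o₂.lt x b}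
      = ⋃ (x : K) (h1 : o₂.lt a x) (h2 : o₂.lt x b), I x h1 h2 := by
    ext z
    constructor
    · rintro ⟨h1, h2⟩
      exact Set.mem_iUnion.mpr ⟨z, Set.mem_iUnion.mpr ⟨h1,
        Set.mem_iUnion.mpr ⟨h2, hIx z h1 h2⟩⟩⟩
    · intro hz
      obtain ⟨x, hx⟩ := Set.mem_iUnion.mp hz
      obtain ⟨h1, hx⟩ := Set.mem_iUnion.mp hx
      obtain ⟨h2, hx⟩ := Set.mem_iUnion.mp hx
      exact hIsub x h1 h2 hx
  rw [heq]
  exact isOpen_iUnion fun x => isOpen_iUnion fun h1 => isOpen_iUnion fun h2 => hIopen x h1 h2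

end Main2

/-- On an almost real closed field, any two orders making it a linearly ordered field
induce the same order topology. -/
theorem orderTopology_eq_of_almostRealClosed (K : Type*) [Field K]
    (hK : IsAlmostRealClosedField K) (o₁ o₂ : FieldOrder K) :
    orderTopologyOf o₁.lt = orderTopologyOf o₂.lt := by
  obtain ⟨A, hH, o, ho⟩ := hK
  haveI := hH
  exact le_antisymm (orderTopology_le_aux A o ho.1 o₁ o₂)
    (orderTopology_le_aux A o ho.1 o₂ o₁)
end

section
/- Let (K,<) be a linearly ordered field and let A be a convex valuation subring of K. Let U = {u ∈ K : u > 0 and u is a unit of A} and let K₊ = {x ∈ K : x > 0}, both considered as multiplicative groups. Suppose there exists a group homomorphism σ : K₊ → U with σ(u) = u for every u ∈ U. Then K admits an angular component map for A that is compatible with <; explicitly, the map ac defined by ac(x) = res(σ(x)) for x > 0, ac(x) = −res(σ(−x)) for x < 0, and ac(0) = 0 is an angular component map for A compatible with <. -/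
/-- A valuation subring of a linearly ordered field is convex if together with any two
of its elements it contains every element of the field lying between them. -/
def IsConvexValuationSubring (K : Type*) [Field K] [LinearOrder K] [IsStrictOrderedRing K]
    (A : ValuationSubring K) : Prop :=
  ∀ a b c : K, a ∈ A → b ∈ A → a ≤ c → c ≤ b → c ∈ A

open scoped Classical

/-- The residue map of a valuation subring `A`, extended to all of `K` by `0`
outside of `A`. -/
noncomputable def residueOn {K : Type*} [Field K] (A : ValuationSubring K) (x : K) :
    IsLocalRing.ResidueField A :=
  if h : x ∈ A then IsLocalRing.residue A ⟨x, h⟩ else 0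

/-- `ac : K → ResidueField A` is an angular component map for `A` compatible with the
order on `K`, where the residue field is equipped with the linear order `lo'`:
`ac 0 = 0`, `ac` is multiplicative, `ac` agrees with the residue map on units of `A`,
and `x > 0` if and only if `ac x > 0`. -/
def IsCompatibleAngularComponent {K : Type*} [Field K] [LinearOrder K] [IsStrictOrderedRing K]
    (A : ValuationSubring K) (lo' : LinearOrder (IsLocalRing.ResidueField A))
    (ac : K → IsLocalRing.ResidueField A) : Prop :=
  ac 0 = 0 ∧ (∀ x y : K, ac (x * y) = ac x * ac y) ∧
    (∀ (u : K) (h : u ∈ A), u⁻¹ ∈ A → ac u = IsLocalRing.residue A ⟨u, h⟩) ∧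
    (∀ x : K, 0 < x ↔ lo'.lt 0 (ac x))

section Aux

variable {K : Type*} [Field K] [LinearOrder K] [IsStrictOrderedRing K] (A : ValuationSubring K)

lemma residueOn_of_mem {x : K} (hx : x ∈ A) :
    residueOn A x = IsLocalRing.residue A ⟨x, hx⟩ := by
  simp [residueOn, hx]

lemma residueOn_ne_zero {x : K} (hx0 : x ≠ 0) (hx : x ∈ A) (hxi : x⁻¹ ∈ A) :
    residueOn A x ≠ 0 := by
  rw [residueOn_of_mem A hx]
  rw [IsLocalRing.residue_ne_zero_iff_isUnit]
  exact IsUnit.of_mul_eq_one ⟨x⁻¹, hxi⟩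
    (by ext; simp [mul_inv_cancel₀ hx0])

lemma residueOn_mul {x y : K} (hx : x ∈ A) (hy : y ∈ A) :
    residueOn A (x * y) = residueOn A x * residueOn A y := by
  rw [residueOn_of_mem A hx, residueOn_of_mem A hy,
    residueOn_of_mem A (mul_mem hx hy), ← map_mul]
  rfl

lemma residueOn_neg {x : K} (hx : x ∈ A) :
    residueOn A (-x) = -residueOn A x := by
  rw [residueOn_of_mem A hx, residueOn_of_mem A (neg_mem hx), ← map_neg]
  rfl

end Aux

/-- Let `(K, <)` be a linearly ordered field, `A` a convex valuation subring of `K`,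
`U` the group of positive units of `A` and `K₊` the multiplicative group of positive
elements of `K`. If `σ : K₊ → U` is a group homomorphism restricting to the identity
on `U`, then the map `ac` defined by `ac x = res (σ x)` for `x > 0`,
`ac x = -res (σ (-x))` for `x < 0` and `ac 0 = 0` is an angular component map for `A`
compatible with `<` (the residue field being equipped with its induced order `lo'`). -/
theorem angularComponent_of_section (K : Type*) [Field K] [LinearOrder K] [IsStrictOrderedRing K]
    (A : ValuationSubring K) (hconv : IsConvexValuationSubring K A)
    -- `lo'` is the induced order on the residue field of `A`:
    (lo' : LinearOrder (IsLocalRing.ResidueField A))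
    (hind : ∀ a b : A, IsLocalRing.residue A a ≠ IsLocalRing.residue A b →
      (lo'.lt (IsLocalRing.residue A a) (IsLocalRing.residue A b) ↔ (a : K) < (b : K)))
    -- `σ : K₊ → U` is a group homomorphism with `σ u = u` for all `u ∈ U`:
    (σ : K → K)
    (hσ_mem : ∀ x : K, 0 < x → 0 < σ x ∧ σ x ∈ A ∧ (σ x)⁻¹ ∈ A)
    (hσ_mul : ∀ x y : K, 0 < x → 0 < y → σ (x * y) = σ x * σ y)
    (hσ_id : ∀ u : K, 0 < u → u ∈ A → u⁻¹ ∈ A → σ u = u) :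
    IsCompatibleAngularComponent A lo'
      (fun x => if 0 < x then residueOn A (σ x)
        else if x < 0 then -(residueOn A (σ (-x))) else 0) := by
  letI := lo'
  have key : ∀ (x : K) (hx : 0 < x), residueOn A (σ x) =
      IsLocalRing.residue A ⟨σ x, (hσ_mem x hx).2.1⟩ ∧ residueOn A (σ x) ≠ 0 := by
    intro x hx
    obtain ⟨h1, h2, h3⟩ := hσ_mem x hx
    exact ⟨residueOn_of_mem A h2, residueOn_ne_zero A (ne_of_gt h1) h2 h3⟩
  have hpos : ∀ x : K, 0 < x → lo'.lt 0 (residueOn A (σ x)) := by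
    intro x hx
    obtain ⟨h1, h2, h3⟩ := hσ_mem x hx
    obtain ⟨he, hne⟩ := key x hx
    rw [he]
    have h0 : IsLocalRing.residue A (0 : A) = 0 := map_zero _
    have := hind 0 ⟨σ x, h2⟩ (by rw [h0]; exact fun h => hne (he.trans h.symm))
    rw [h0] at this
    exact this.mpr h1
  refine ⟨by simp, ?_, ?_, ?_⟩
  · -- multiplicativity
    intro x y
    dsimp only
    rcases lt_trichotomy x 0 with hx | hx | hx <;>
      rcases lt_trichotomy y 0 with hy | hy | hy
    · have hxy : 0 < x * y := mul_pos_of_neg_of_neg hx hy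
      have hs : σ (x * y) = σ (-x) * σ (-y) := by
        rw [← hσ_mul _ _ (neg_pos.mpr hx) (neg_pos.mpr hy)]; ring_nf
      rw [if_pos hxy, if_neg (not_lt_of_gt hx), if_pos hx,
        if_neg (not_lt_of_gt hy), if_pos hy, hs,
        residueOn_mul A (hσ_mem _ (neg_pos.mpr hx)).2.1 (hσ_mem _ (neg_pos.mpr hy)).2.1]
      ring
    · subst hy; simp [not_lt_of_gt hx, hx]
    · have hxy : x * y < 0 := mul_neg_of_neg_of_pos hx hy
      have hs : σ (-(x * y)) = σ (-x) * σ y := by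
        rw [← hσ_mul _ _ (neg_pos.mpr hx) hy]; ring_nf
      rw [if_neg (not_lt_of_gt hxy), if_pos hxy, if_neg (not_lt_of_gt hx), if_pos hx,
        if_pos hy, hs,
        residueOn_mul A (hσ_mem _ (neg_pos.mpr hx)).2.1 (hσ_mem _ hy).2.1]
      ring
    · subst hx; simp
    · subst hx; simp
    · subst hx; simp
    · have hxy : x * y < 0 := mul_neg_of_pos_of_neg hx hy
      have hs : σ (-(x * y)) = σ x * σ (-y) := by
        rw [← hσ_mul _ _ hx (neg_pos.mpr hy)]; ring_nf
      rw [if_neg (not_lt_of_gt hxy), if_pos hxy, if_pos hx,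
        if_neg (not_lt_of_gt hy), if_pos hy, hs,
        residueOn_mul A (hσ_mem _ hx).2.1 (hσ_mem _ (neg_pos.mpr hy)).2.1]
      ring
    · subst hy; simp [not_lt_of_gt hx, hx]
    · have hxy : 0 < x * y := mul_pos hx hy
      rw [if_pos hxy, if_pos hx, if_pos hy, hσ_mul _ _ hx hy,
        residueOn_mul A (hσ_mem _ hx).2.1 (hσ_mem _ hy).2.1]
  · -- units
    intro u hu hui
    dsimp only
    rcases lt_trichotomy u 0 with h | h | h
    · have h1 : (0:K) < -u := neg_pos.mpr h
      have h2 : (-u)⁻¹ ∈ A := by rw [inv_neg]; exact neg_mem hui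
      rw [if_neg (not_lt_of_gt h), if_pos h, hσ_id (-u) h1 (neg_mem hu) h2,
        residueOn_neg A hu, neg_neg, residueOn_of_mem A hu]
    · subst h
      rw [if_neg (lt_irrefl 0), if_neg (lt_irrefl 0),
        show (⟨(0:K), hu⟩ : A) = 0 from rfl, map_zero]
    · rw [if_pos h, hσ_id u h hu hui, residueOn_of_mem A hu]
  · -- compatibility
    intro x
    dsimp only
    rcases lt_trichotomy x 0 with h | h | h
    · rw [if_neg (not_lt_of_gt h), if_pos h]
      constructor
      · intro hx; exact absurd hx (not_lt_of_gt h)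
      · intro hlt
        exfalso
        have h1 : (0:K) < -x := neg_pos.mpr h
        obtain ⟨hp, hm, hmi⟩ := hσ_mem _ h1
        obtain ⟨he, hne⟩ := key _ h1
        have h0 : IsLocalRing.residue A (0 : A) = 0 := map_zero _
        have hres : -(residueOn A (σ (-x))) = IsLocalRing.residue A (-⟨σ (-x), hm⟩) := by
          rw [he, map_neg]
        have hne2 : IsLocalRing.residue A (0:A) ≠ IsLocalRing.residue A (-⟨σ (-x), hm⟩) := by
          rw [h0, ← hres]
          intro hc
          exact hne (by rw [← neg_neg (residueOn A (σ (-x))), ← hc, neg_zero])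
        have hiff := hind 0 _ hne2
        rw [h0, ← hres] at hiff
        have hlt2 : ((0:A) : K) < ((-⟨σ (-x), hm⟩ : A) : K) := hiff.mp hlt
        simp only [ZeroMemClass.coe_zero] at hlt2
        have : ((-⟨σ (-x), hm⟩ : A) : K) = -(σ (-x)) := rfl
        rw [this] at hlt2
        linarith
    · subst h
      rw [if_neg (lt_irrefl 0), if_neg (lt_irrefl 0)]
      simp only [lt_irrefl, false_iff]
    · rw [if_pos h]
      exact ⟨fun _ => hpos x h, fun _ => h⟩
end

section
/- Let (K,<) be a linearly ordered field, let A be a convex valuation subring of K with associated valuation v and value group Γ, and let K₊ = {x ∈ K : x > 0}. Suppose there exists a group homomorphism s : Γ → K₊ (from the additive value group to the multiplicative group of positive elements) with v(s(γ)) = γ for all γ ∈ Γ. Then the map ac : K → ResidueField(A) defined by ac(x) = res(x · s(v(x))⁻¹) for x ≠ 0 and ac(0) = 0 is an angular component map for A that is compatible with <. -/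
open scoped Classical

/-- Let `(K, <)` be a linearly ordered field, `A` a convex valuation subring of `K`
with associated valuation `v : K → Γ` (where `Γ = A.ValueGroup` is written
multiplicatively, with an absorbing bottom element `0 = v 0`), and let `K₊` be the
multiplicative group of positive elements of `K`. If `s : Γ → K₊` is a group
homomorphism which is a section of `v` (on nonzero values of `Γ`), then the map
`ac` defined by `ac x = res (x * s (v x)⁻¹)` for `x ≠ 0` and `ac 0 = 0` is an angular
component map for `A` compatible with `<` (the residue field being equipped with its
induced order `lo'`). -/
theorem angularComponent_of_valuationSection (K : Type*) [Field K] [LinearOrder K] [IsStrictOrderedRing K]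
    (A : ValuationSubring K) (hconv : IsConvexValuationSubring K A)
    -- `lo'` is the induced order on the residue field of `A`:
    (lo' : LinearOrder (IsLocalRing.ResidueField A))
    (hind : ∀ a b : A, IsLocalRing.residue A a ≠ IsLocalRing.residue A b →
      (lo'.lt (IsLocalRing.residue A a) (IsLocalRing.residue A b) ↔ (a : K) < (b : K)))
    -- `s : Γ → K₊` is a group homomorphism with `v (s γ) = γ`:
    (s : A.ValueGroup → K)
    (hs_pos : ∀ γ : A.ValueGroup, γ ≠ 0 → 0 < s γ)
    (hs_mul : ∀ γ δ : A.ValueGroup, γ ≠ 0 → δ ≠ 0 → s (γ * δ) = s γ * s δ)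
    (hs_sec : ∀ γ : A.ValueGroup, γ ≠ 0 → A.valuation (s γ) = γ) :
    IsCompatibleAngularComponent A lo'
      (fun x => if x = 0 then 0 else residueOn A (x * (s (A.valuation x))⁻¹)) := by
  classical
  have hv0 : ∀ x : K, x ≠ 0 → A.valuation x ≠ 0 := fun x hx =>
    fun h => hx ((Valuation.zero_iff _).mp h)
  have hs1 : s 1 = 1 := by
    have h := hs_mul 1 1 one_ne_zero one_ne_zero
    rw [one_mul] at h
    have hpos := hs_pos 1 one_ne_zero
    have := mul_left_cancel₀ (ne_of_gt hpos)
      (show s 1 * 1 = s 1 * s 1 by rw [mul_one, ← h])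
    exact this.symm
  -- key facts about u x := x * (s (v x))⁻¹ for x ≠ 0
  have hval : ∀ x : K, x ≠ 0 → A.valuation (x * (s (A.valuation x))⁻¹) = 1 := by
    intro x hx
    rw [map_mul, map_inv₀, hs_sec _ (hv0 x hx)]
    exact mul_inv_cancel₀ (hv0 x hx)
  have hmem : ∀ x : K, x ≠ 0 → x * (s (A.valuation x))⁻¹ ∈ A := fun x hx =>
    A.mem_of_valuation_le_one _ (le_of_eq (hval x hx))
  have hunit : ∀ x : K, (hx : x ≠ 0) → IsUnit (⟨_, hmem x hx⟩ : A) := by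
    intro x hx
    rw [ValuationSubring.valuation_eq_one_iff]
    exact hval x hx
  have hres : ∀ (x : K) (h : x ∈ A), residueOn A x = IsLocalRing.residue A ⟨x, h⟩ := by
    intro x h
    simp [residueOn, h]
  have hne : ∀ x : K, (hx : x ≠ 0) →
      IsLocalRing.residue A (⟨_, hmem x hx⟩ : A) ≠ 0 := by
    intro x hx
    rw [IsLocalRing.residue_ne_zero_iff_isUnit]
    exact hunit x hx
  refine ⟨by simp, ?_, ?_, ?_⟩
  · -- multiplicativity
    intro x y
    by_cases hx : x = 0
    · simp [hx]
    by_cases hy : y = 0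
    · simp [hy]
    have hxy : x * y ≠ 0 := mul_ne_zero hx hy
    simp only [hxy, hx, hy, if_false]
    have hv : A.valuation (x * y) = A.valuation x * A.valuation y := map_mul _ _ _
    have hseq : s (A.valuation (x * y)) = s (A.valuation x) * s (A.valuation y) := by
      rw [hv]; exact hs_mul _ _ (hv0 x hx) (hv0 y hy)
    have harg : x * y * (s (A.valuation (x * y)))⁻¹
        = (x * (s (A.valuation x))⁻¹) * (y * (s (A.valuation y))⁻¹) := by
      rw [hseq, mul_inv]; ring
    rw [harg, hres _ (A.mul_mem _ _ (hmem x hx) (hmem y hy)),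
        hres _ (hmem x hx), hres _ (hmem y hy), ← map_mul]
    rfl
  · -- agreement on units
    intro u h hinv
    by_cases hu : u = 0
    · subst hu
      have : (⟨(0 : K), h⟩ : A) = 0 := rfl
      rw [this, map_zero]
      simp
    · simp only [hu, if_false]
      have hv1 : A.valuation u = 1 := by
        have h1 : A.valuation u ≤ 1 := (A.valuation_le_one_iff u).mpr h
        have h2 : (A.valuation u)⁻¹ ≤ 1 := by
          rw [← map_inv₀]; exact (A.valuation_le_one_iff _).mpr hinv
        have h3 : 1 ≤ A.valuation u :=
          (inv_le_one₀ (zero_lt_iff.mpr (hv0 u hu))).mp h2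
        exact le_antisymm h1 h3
      have : u * (s (A.valuation u))⁻¹ = u := by
        rw [hv1, hs1, inv_one, mul_one]
      rw [this, hres _ h]
  · -- compatibility with the order
    intro x
    by_cases hx : x = 0
    · subst hx
      simp only [if_pos rfl]
      exact ⟨fun h => absurd h (lt_irrefl 0), fun h => ((((lo'.lt_iff_le_not_ge 0 0).mp h).2) (((lo'.lt_iff_le_not_ge 0 0).mp h).1)).elim⟩
    · simp only [hx, if_false]
      rw [hres _ (hmem x hx)]
      have hspos : 0 < s (A.valuation x) := hs_pos _ (hv0 x hx)
      have hx_iff : 0 < x ↔ 0 < x * (s (A.valuation x))⁻¹ := by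
        constructor
        · intro h; exact mul_pos h (inv_pos.mpr hspos)
        · intro h
          have := mul_pos h hspos
          rwa [mul_assoc, inv_mul_cancel₀ (ne_of_gt hspos), mul_one] at this
      have hdist : IsLocalRing.residue A (0 : A)
          ≠ IsLocalRing.residue A (⟨_, hmem x hx⟩ : A) := by
        rw [map_zero]
        exact fun h => hne x hx h.symm
      have h0 : IsLocalRing.residue A (0 : A) = 0 := map_zero _
      have := hind 0 ⟨_, hmem x hx⟩ hdist
      rw [h0] at this
      rw [hx_iff]
      exact (this.trans (by norm_num)).symm
end

section
/- Let K be a field with a linear order < making it a linearly ordered field, and let A be a valuation subring of K that is convex with respect to <, is henselian as a local ring, and whose residue field (with the induced order) is real closed. Then there exists an angular component map ac : K → ResidueField(A) that is compatible with <. -/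
/-- A field `F` equipped with a linear order `lo` is real closed if every nonnegative
element is a square and every polynomial of odd degree has a root. -/
def IsRealClosedWith (F : Type*) [Field F] (lo : LinearOrder F) : Prop :=
  (∀ x : F, ¬ lo.lt x 0 → ∃ y : F, y ^ 2 = x) ∧
    (∀ p : Polynomial F, Odd p.natDegree → ∃ x : F, p.eval x = 0)

def buildLOF {F : Type*} [Field F] (lo : LinearOrder F)
    (h01 : lo.lt 0 1)
    (hadd : ∀ a b : F, lo.le a b → ∀ c : F, lo.le (c + a) (c + b))
    (hmul : ∀ a b : F, lo.lt 0 a → lo.lt 0 b → lo.lt 0 (a * b)) :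
    @IsStrictOrderedRing F _ lo.toPartialOrder :=
  letI := lo
  haveI : IsOrderedAddMonoid F :=
    { add_le_add_left := fun a b h c => by rw [add_comm a c, add_comm b c]; exact hadd a b h c }
  haveI : ZeroLEOneClass F := ⟨le_of_lt h01⟩
  IsStrictOrderedRing.of_mul_pos hmul

lemma aux_pos_root {F : Type*} [Field F] [LinearOrder F] [IsStrictOrderedRing F]
    (hsq : ∀ x : F, ¬ x < 0 → ∃ y, y ^ 2 = x)
    (hodd : ∀ p : Polynomial F, Odd p.natDegree → ∃ x, p.eval x = 0) :
    ∀ n : ℕ, n ≠ 0 → ∀ a : F, 0 < a → ∃ b : F, 0 < b ∧ b ^ n = a := by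
  intro n
  induction n using Nat.strong_induction_on with
  | _ n ih =>
    intro hn a ha
    rcases Nat.even_or_odd n with he | ho
    · obtain ⟨m, rfl⟩ := he
      obtain ⟨y, hy⟩ := hsq a (not_lt.2 ha.le)
      have hy0 : y ≠ 0 := by rintro rfl; rw [← hy] at ha; simp at ha
      obtain ⟨b, hb, hbm⟩ := ih m (by omega) (by omega) |y| (abs_pos.2 hy0)
      refine ⟨b, hb, ?_⟩
      rw [show m + m = m * 2 by ring, pow_mul, hbm, sq_abs, hy]
    · obtain ⟨x, hx⟩ := hodd (Polynomial.X ^ n - Polynomial.C a)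
        (by rw [Polynomial.natDegree_X_pow_sub_C]; exact ho)
      rw [Polynomial.eval_sub, Polynomial.eval_pow, Polynomial.eval_X, Polynomial.eval_C,
        sub_eq_zero] at hx
      have hxpos : 0 < x := by
        by_contra hc
        exact absurd (hx ▸ ha) (not_lt.2 (Odd.pow_nonpos ho (not_lt.1 hc)))
      exact ⟨x, hxpos, hx⟩

noncomputable def auxDivisible' {F : Type*} [Field F] [LinearOrder F] [IsStrictOrderedRing F]
    (hsq : ∀ x : F, ¬ x < 0 → ∃ y, y ^ 2 = x)
    (hodd : ∀ p : Polynomial F, Odd p.natDegree → ∃ x, p.eval x = 0) :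
    DivisibleBy (Additive { x : F // 0 < x }) ℤ :=
  divisibleByOfSMulRightSurj _ _ (fun {n} hn a => by
    obtain ⟨c, hc, hcn⟩ := aux_pos_root hsq hodd n.natAbs (by simpa using hn)
      (Additive.toMul a).1 (Additive.toMul a).2
    have hpow : (⟨c, hc⟩ : { x : F // 0 < x }) ^ n.natAbs = Additive.toMul a :=
      Subtype.ext (by rw [Positive.val_pow]; exact hcn)
    rcases le_or_gt 0 n with h | h
    · refine ⟨Additive.ofMul (⟨c, hc⟩ : { x : F // 0 < x }), ?_⟩
      show n • Additive.ofMul (⟨c, hc⟩ : { x : F // 0 < x }) = a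
      rw [← ofMul_zpow, show n = (n.natAbs : ℤ) by omega, zpow_natCast, hpow]
      rfl
    · refine ⟨Additive.ofMul ((⟨c, hc⟩ : { x : F // 0 < x })⁻¹), ?_⟩
      show n • Additive.ofMul ((⟨c, hc⟩ : { x : F // 0 < x })⁻¹) = a
      rw [← ofMul_zpow, inv_zpow, ← zpow_neg, show -n = (n.natAbs : ℤ) by omega,
        zpow_natCast, hpow]
      rfl)

lemma exists_extension {G P : Type*} [CommGroup G] [CommGroup P]
    [DivisibleBy (Additive P) ℤ] (H : Subgroup G) (φ : H →* P) :
    ∃ ψ : G →* P, ∀ h : H, ψ h = φ h := by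
  have baer : Module.Baer ℤ (Additive P) := Module.Baer.of_divisible _
  obtain ⟨h, hh⟩ := baer.extension_property_addMonoidHom
    (MonoidHom.toAdditive H.subtype)
    (fun a b hab => by
      exact Additive.toMul.injective (Subtype.ext (congrArg Additive.toMul hab)))
    (MonoidHom.toAdditive φ)
  refine ⟨MonoidHom.toAdditive.symm h, fun x => ?_⟩
  exact congrArg Additive.toMul (DFunLike.congr_fun hh (Additive.ofMul x))

set_option maxHeartbeats 1000000 in

/-- Let `(K, <)` be a linearly ordered field and let `A` be a convex valuation subring
of `K` which is henselian as a local ring and whose residue field, with the induced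
order, is real closed. Then there exists an angular component map
`ac : K → ResidueField A` compatible with `<`. -/
theorem exists_compatible_angularComponent (K : Type*) [Field K] [LinearOrder K] [IsStrictOrderedRing K]
    (A : ValuationSubring K) (hconv : IsConvexValuationSubring K A)
    (hhens : HenselianLocalRing A)
    -- `lo'` is the induced order on the residue field of `A`:
    (lo' : LinearOrder (IsLocalRing.ResidueField A))
    (hind : ∀ a b : A, IsLocalRing.residue A a ≠ IsLocalRing.residue A b →
      (lo'.lt (IsLocalRing.residue A a) (IsLocalRing.residue A b) ↔ (a : K) < (b : K)))
    (hrc : IsRealClosedWith (IsLocalRing.ResidueField A) lo') :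
    ∃ ac : K → IsLocalRing.ResidueField A, IsCompatibleAngularComponent A lo' ac := by
  let k := IsLocalRing.ResidueField A
  let res := IsLocalRing.residue A
  have hres : Function.Surjective res := IsLocalRing.residue_surjective
  have h01 : lo'.lt (0 : k) 1 := by
    have h := hind 0 1 (by rw [map_zero, map_one]; exact zero_ne_one)
    rw [map_zero, map_one] at h
    exact h.mpr (by norm_num)
  have hpos : ∀ x : A, res x ≠ 0 → (lo'.lt 0 (res x) ↔ (0 : K) < (x : K)) := by
    intro x hx
    have h := hind 0 x (by rw [map_zero]; exact Ne.symm hx)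
    rw [map_zero] at h
    simpa using h
  have hadd : ∀ a b : k, lo'.le a b → ∀ c : k, lo'.le (c + a) (c + b) := by
    intro a b hab c
    obtain ⟨x, rfl⟩ := hres a; obtain ⟨y, rfl⟩ := hres b; obtain ⟨z, rfl⟩ := hres c
    letI := lo'
    by_contra hcon
    have hlt : lo'.lt (res z + res y) (res z + res x) := lt_of_not_ge hcon
    have hne : res y ≠ res x := fun h => by rw [h] at hlt; exact lt_irrefl _ hlt
    have h1 : res (z + y) ≠ res (z + x) := by
      rw [map_add, map_add]; intro h; exact hne (add_left_cancel h)
    have h2 := (hind (z + y) (z + x) h1).mp (by rw [map_add, map_add]; exact hlt)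
    have h3 : (y : K) < (x : K) := by push_cast at h2; linarith
    exact absurd ((hind y x hne).mpr h3) (not_lt_of_ge hab)
  have hmul : ∀ a b : k, lo'.lt 0 a → lo'.lt 0 b → lo'.lt 0 (a * b) := by
    intro a b ha hb
    obtain ⟨x, rfl⟩ := hres a; obtain ⟨y, rfl⟩ := hres b
    letI := lo'
    have hx0 : res x ≠ 0 := (ne_of_lt ha).symm
    have hy0 : res y ≠ 0 := (ne_of_lt hb).symm
    have hxy : res (x * y) ≠ 0 := by rw [map_mul]; exact mul_ne_zero hx0 hy0
    have h := (hpos (x * y) hxy).mpr (by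
      push_cast
      exact mul_pos ((hpos x hx0).mp ha) ((hpos y hy0).mp hb))
    rw [map_mul] at h; exact h
  letI : LinearOrder k := lo'
  haveI lf : IsStrictOrderedRing k := buildLOF lo' h01 hadd hmul
  letI : DivisibleBy (Additive { x : k // 0 < x }) ℤ := auxDivisible' hrc.1 hrc.2
  -- the subgroup of positive units of A inside the group of positive elements of K
  let H : Subgroup { x : K // 0 < x } :=
    { carrier := { x | (x : K) ∈ A ∧ (x : K)⁻¹ ∈ A }
      mul_mem' := fun {x y} hx hy => ⟨A.mul_mem _ _ hx.1 hy.1,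
        by rw [Positive.val_mul, mul_inv]; exact A.mul_mem _ _ hx.2 hy.2⟩
      one_mem' := ⟨A.one_mem, by rw [Positive.val_one, inv_one]; exact A.one_mem⟩
      inv_mem' := fun {x} hx => ⟨hx.2, by rw [Positive.coe_inv, inv_inv]; exact hx.1⟩ }
  have hresne : ∀ (u : K) (h1 : u ∈ A), u⁻¹ ∈ A → u ≠ 0 → res ⟨u, h1⟩ ≠ 0 := by
    intro u h1 h2 hu
    have hmul1 : res ⟨u, h1⟩ * res ⟨u⁻¹, h2⟩ = 1 := by
      rw [← map_mul, ← map_one res]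
      congr 1
      exact Subtype.ext (mul_inv_cancel₀ hu)
    exact left_ne_zero_of_mul_eq_one hmul1
  let φ : H →* { x : k // 0 < x } :=
    { toFun := fun u => ⟨res ⟨u.1.1, u.2.1⟩,
        (hpos _ (hresne _ u.2.1 u.2.2 (ne_of_gt u.1.2))).mpr u.1.2⟩
      map_one' := Subtype.ext (by
        show res ⟨(1 : K), _⟩ = 1
        rw [← map_one res]
        rfl)
      map_mul' := fun u v => Subtype.ext (by
        show res ⟨_, _⟩ = res ⟨_, _⟩ * res ⟨_, _⟩
        rw [← map_mul]
        rfl) }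
  obtain ⟨ψ, hψ⟩ := exists_extension H φ
  -- the angular component map
  let ac : K → k := fun x =>
    if hx : 0 < x then (ψ ⟨x, hx⟩ : { y : k // 0 < y }).1
    else if hx' : 0 < -x then -(ψ ⟨-x, hx'⟩ : { y : k // 0 < y }).1 else 0
  have ac_pos : ∀ (x : K) (hx : 0 < x), ac x = (ψ ⟨x, hx⟩).1 := fun x hx => dif_pos hx
  have ac_neg : ∀ (x : K) (hx : x < 0), ac x = -(ψ ⟨-x, neg_pos.2 hx⟩).1 := fun x hx => by
    rw [show ac x = _ from dif_neg (not_lt_of_gt hx), dif_pos (neg_pos.2 hx)]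
  have ac_zero : ac 0 = 0 := by
    show (if hx : (0:K) < 0 then _ else if hx' : (0:K) < -0 then _ else (0:k)) = 0
    rw [dif_neg (lt_irrefl (0:K)), dif_neg (by rw [neg_zero]; exact lt_irrefl (0:K))]
  have psi_mul : ∀ x y : { x : K // 0 < x }, (ψ (x * y)).1 = (ψ x).1 * (ψ y).1 := by
    intro x y; rw [map_mul]; rfl
  refine ⟨ac, ac_zero, ?_, ?_, ?_⟩
  · -- multiplicativity
    intro x y
    rcases lt_trichotomy 0 x with hx | hx | hx
    · rcases lt_trichotomy 0 y with hy | hy | hy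
      · rw [ac_pos x hx, ac_pos y hy, ac_pos (x * y) (mul_pos hx hy),
          show (⟨x * y, mul_pos hx hy⟩ : { x : K // 0 < x }) = ⟨x, hx⟩ * ⟨y, hy⟩ from rfl,
          psi_mul]
      · rw [← hy, mul_zero, ac_zero, mul_zero]
      · have hxy : x * y < 0 := mul_neg_of_pos_of_neg hx hy
        rw [ac_pos x hx, ac_neg y hy, ac_neg (x * y) hxy,
          show (⟨-(x * y), neg_pos.2 hxy⟩ : { x : K // 0 < x })
            = ⟨x, hx⟩ * ⟨-y, neg_pos.2 hy⟩ from Subtype.ext (by show -(x*y) = x * -y; ring),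
          psi_mul, mul_neg]
    · rw [← hx, zero_mul, ac_zero, zero_mul]
    · rcases lt_trichotomy 0 y with hy | hy | hy
      · have hxy : x * y < 0 := mul_neg_of_neg_of_pos hx hy
        rw [ac_neg x hx, ac_pos y hy, ac_neg (x * y) hxy,
          show (⟨-(x * y), neg_pos.2 hxy⟩ : { x : K // 0 < x })
            = ⟨-x, neg_pos.2 hx⟩ * ⟨y, hy⟩ from Subtype.ext (by show -(x*y) = -x * y; ring),
          psi_mul, neg_mul]
      · rw [← hy, mul_zero, ac_zero, mul_zero]
      · have hxy : 0 < x * y := mul_pos_of_neg_of_neg hx hy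
        rw [ac_neg x hx, ac_neg y hy, ac_pos (x * y) hxy,
          show (⟨x * y, hxy⟩ : { x : K // 0 < x })
            = ⟨-x, neg_pos.2 hx⟩ * ⟨-y, neg_pos.2 hy⟩ from
              Subtype.ext (by show x * y = -x * -y; ring),
          psi_mul, neg_mul_neg]
  · -- units
    intro u h hinv
    rcases lt_trichotomy 0 u with hu | hu | hu
    · have hmem : (⟨u, hu⟩ : { x : K // 0 < x }) ∈ H := ⟨h, hinv⟩
      rw [ac_pos u hu]
      have := hψ ⟨⟨u, hu⟩, hmem⟩
      rw [show ((⟨⟨u, hu⟩, hmem⟩ : H) : { x : K // 0 < x }) = ⟨u, hu⟩ from rfl] at this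
      rw [this]
      rfl
    · subst hu
      rw [ac_zero, show ((⟨(0:K), h⟩ : A)) = 0 from Subtype.ext rfl, map_zero]
    · have hu' : 0 < -u := neg_pos.2 hu
      have hmem : (⟨-u, hu'⟩ : { x : K // 0 < x }) ∈ H :=
        ⟨A.neg_mem _ h, by rw [inv_neg]; exact A.neg_mem _ hinv⟩
      rw [ac_neg u hu]
      have h2 := hψ ⟨⟨-u, hu'⟩, hmem⟩
      rw [show ((⟨⟨-u, hu'⟩, hmem⟩ : H) : { x : K // 0 < x }) = ⟨-u, hu'⟩ from rfl] at h2
      rw [h2]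
      show -(res ⟨-u, _⟩) = res ⟨u, h⟩
      rw [show (⟨-u, A.neg_mem _ h⟩ : A) = -⟨u, h⟩ from Subtype.ext rfl, map_neg, neg_neg]
  · -- compatibility
    intro x
    constructor
    · intro hx
      rw [ac_pos x hx]
      exact (ψ ⟨x, hx⟩).2
    · intro hx
      rcases lt_trichotomy 0 x with h | h | h
      · exact h
      · exfalso; rw [← h, ac_zero] at hx; exact lt_irrefl _ hx
      · exfalso
        rw [ac_neg x h] at hx
        have hx' : (0 : k) < -(ψ ⟨-x, neg_pos.2 h⟩).1 := hx
        have hp : (0 : k) < (ψ ⟨-x, neg_pos.2 h⟩).1 := (ψ ⟨-x, neg_pos.2 h⟩).2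
        exact lt_irrefl _ (hp.trans (neg_pos.mp hx'))
end
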